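/- Let T be a positive sesquilinear form on D with N(T) = {0}, and let ‖·‖ and ‖·‖' be two norms on D making D a Banach space in each, such that T(ξ,ξ) ≤ α‖ξ‖² and T(ξ,ξ) ≤ α'‖ξ‖'² for all ξ ∈ D with constants α, α' > 0. Then ‖·‖ and ‖·‖' are equivalent. -/

import Mathlib

noncomputable section

open Filter Topology Function
open scoped InnerProductSpace

namespace Paper

variable {V : Type} [AddCommGroup V] [Module ℂ V]

/-- `n` is a norm on the complex vector space `V`. -/
def IsNormFn (n : V → ℝ) : Prop :=
  (∀ x : V, n x = 0 ↔ x = 0) ∧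
    (∀ (c : ℂ) (x : V), n (c • x) = ‖c‖ * n x) ∧
      ∀ x y : V, n (x + y) ≤ n x + n y

/-- `ξ` is a Cauchy sequence with respect to the norm `n`. -/
def IsCauchyWrt (n : V → ℝ) (ξ : ℕ → V) : Prop :=
  ∀ ε : ℝ, 0 < ε → ∃ N : ℕ, ∀ p q : ℕ, N ≤ p → N ≤ q → n (ξ p - ξ q) < ε

/-- `ξ` tends to `x` with respect to the norm `n`. -/
def TendstoWrt (n : V → ℝ) (ξ : ℕ → V) (x : V) : Prop :=
  Tendsto (fun k => n (ξ k - x)) atTop (𝓝 0)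

/-- `V` is complete with respect to the norm `n`. -/
def CompleteWrt (n : V → ℝ) : Prop :=
  ∀ ξ : ℕ → V, IsCauchyWrt n ξ → ∃ x : V, TendstoWrt n ξ x

/-- The two norms `n₁` and `n₂` are equivalent. -/
def EquivNorms (n₁ n₂ : V → ℝ) : Prop :=
  ∃ c₁ : ℝ, 0 < c₁ ∧ ∃ c₂ : ℝ, 0 < c₂ ∧ ∀ x : V, n₁ x ≤ c₁ * n₂ x ∧ n₂ x ≤ c₂ * n₁ x

/-- `Ω` is a sesquilinear form: linear in the first entry, conjugate-linear in the second. -/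
def IsSesq (Ω : V → V → ℂ) : Prop :=
  (∀ η : V, IsLinearMap ℂ fun ξ => Ω ξ η) ∧
    ∀ ξ : V, IsLinearMap ℂ fun η => (starRingEnd ℂ) (Ω ξ η)

/-- `T` is a positive form: `T(ξ,ξ) ≥ 0` for every `ξ`. -/
def IsPositiveForm (T : V → V → ℂ) : Prop :=
  ∀ x : V, (T x x).im = 0 ∧ 0 ≤ (T x x).re

/-- The norm `n` is compatible with the positive sesquilinear form `T`. -/
def CompatibleWithForm (T : V → V → ℂ) (n : V → ℝ) : Prop :=
  (∃ α : ℝ, 0 < α ∧ ∀ ξ : V, (T ξ ξ).re ≤ α * n ξ ^ 2) ∧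
    ∀ ξ : ℕ → V, Tendsto (fun k => (T (ξ k) (ξ k)).re) atTop (𝓝 0) →
      IsCauchyWrt n ξ → Tendsto (fun k => n (ξ k)) atTop (𝓝 0)

/-- A realization of `(V, n)` as a dense subspace of a reflexive Banach space `E`. -/
structure BanachModel (V : Type) [AddCommGroup V] [Module ℂ V] (n : V → ℝ) : Type 1 where
  E : Type
  [instGroup : NormedAddCommGroup E]
  [instSpace : NormedSpace ℂ E]
  [instComplete : CompleteSpace E]
  j : V →ₗ[ℂ] E
  isometry : ∀ x : V, ‖j x‖ = n x
  dense : DenseRange j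
  reflexive : Surjective (NormedSpace.inclusionInDoubleDual ℂ E)

/-- `V` endowed with the norm `n` is a reflexive Banach space. -/
def IsReflexiveBanachWrt (n : V → ℝ) : Prop :=
  ∃ M : BanachModel V n, Surjective M.j

/-- The completion of `V` with respect to the norm `n` is a reflexive Banach space. -/
def CompletionIsReflexiveBanach (n : V → ℝ) : Prop :=
  Nonempty (BanachModel V n)

variable {H : Type} [NormedAddCommGroup H] [InnerProductSpace ℂ H]

/-- The embedding of `D[n]` into `H` is continuous. -/
def EmbedsContinuously (D : Submodule ℂ H) (n : D → ℝ) : Prop :=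
  ∃ α : ℝ, 0 < α ∧ ∀ ξ : D, ‖(ξ : H)‖ ≤ α * n ξ

/-- The norm `n` on `D` is compatible with the inner product of `H`. -/
def CompatibleWithInner (D : Submodule ℂ H) (n : D → ℝ) : Prop :=
  EmbedsContinuously D n ∧
    ∀ ξ : ℕ → D, Tendsto (fun k => ‖(ξ k : H)‖) atTop (𝓝 0) →
      IsCauchyWrt n ξ → Tendsto (fun k => n (ξ k)) atTop (𝓝 0)

/-- The form `Ω` is bounded on `D[n]`. -/
def BoundedOn (D : Submodule ℂ H) (Ω : D → D → ℂ) (n : D → ℝ) : Prop :=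
  ∃ β : ℝ, 0 < β ∧ ∀ ξ η : D, ‖Ω ξ η‖ ≤ β * n ξ * n η

/-- `Ω` is q-closed with respect to the norm `n` (Definition 5.2 of Di Bella–Trapani). -/
def IsQClosed (D : Submodule ℂ H) (Ω : D → D → ℂ) (n : D → ℝ) : Prop :=
  IsNormFn n ∧ CompatibleWithInner D n ∧ IsReflexiveBanachWrt n ∧ BoundedOn D Ω n

/-- `Ω` is q-closable with respect to the norm `n`. -/
def IsQClosable (D : Submodule ℂ H) (Ω : D → D → ℂ) (n : D → ℝ) : Prop :=
  IsNormFn n ∧ CompatibleWithInner D n ∧ CompletionIsReflexiveBanach n ∧ BoundedOn D Ω n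

/-- `Λ` is a bounded conjugate-linear functional on `D[n]`,
i.e. an element of the conjugate dual of `D[n]`. -/
def MemConjDual (D : Submodule ℂ H) (n : D → ℝ) (Λ : D → ℂ) : Prop :=
  (∀ x y : D, Λ (x + y) = Λ x + Λ y) ∧
    (∀ (c : ℂ) (x : D), Λ (c • x) = (starRingEnd ℂ) c * Λ x) ∧
      ∃ C : ℝ, ∀ x : D, ‖Λ x‖ ≤ C * n x

/-- `Υ` is a bounded sesquilinear form on `H`. -/
def IsBoundedForm (Υ : H → H → ℂ) : Prop :=
  IsSesq Υ ∧ ∃ C : ℝ, ∀ x y : H, ‖Υ x y‖ ≤ C * ‖x‖ * ‖y‖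

/-- `Υ ∈ P₀(Ω)`: `N(Ω+Υ) = {0}` and every element of the conjugate dual of `D[n]`
is represented by `Ω+Υ`. -/
def InP0 (D : Submodule ℂ H) (Ω : D → D → ℂ) (n : D → ℝ) (Υ : H → H → ℂ) : Prop :=
  (∀ ξ : D, (∀ η : D, Ω ξ η + Υ ↑ξ ↑η = 0) → ξ = 0) ∧
    ∀ Λ : D → ℂ, MemConjDual D n Λ → ∃ ξ : D, ∀ η : D, Λ η = Ω ξ η + Υ ↑ξ ↑η

/-- `Ω` is solvable with respect to the norm `n`. -/
def IsSolvable (D : Submodule ℂ H) (Ω : D → D → ℂ) (n : D → ℝ) : Prop :=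
  IsQClosed D Ω n ∧ ∃ Υ : H → H → ℂ, IsBoundedForm Υ ∧ InP0 D Ω n Υ

/-- The numerical range of a form on `D`. -/
def NumRangeForm (D : Submodule ℂ H) (Ω : D → D → ℂ) : Set ℂ :=
  {z : ℂ | ∃ ξ : D, ‖(ξ : H)‖ = 1 ∧ z = Ω ξ ξ}

/-- The numerical range of a form on `H`. -/
def NumRangeFormH (Υ : H → H → ℂ) : Set ℂ :=
  {z : ℂ | ∃ x : H, ‖x‖ = 1 ∧ z = Υ x x}

/-- `sup { |Θ(ξ,η)| : ‖η‖_Ω = 1 }`. -/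
def FormSup (D : Submodule ℂ H) (Θ : D → D → ℂ) (n : D → ℝ) (ξ : D) : ℝ :=
  sSup {r : ℝ | ∃ η : D, n η = 1 ∧ r = ‖Θ ξ η‖}

end Paper

namespace Paper

section Aux

variable {V : Type} [AddCommGroup V] [Module ℂ V]

lemma sesq_addl {T : V → V → ℂ} (h : IsSesq T) (a b c : V) :
    T (a + b) c = T a c + T b c := (h.1 c).map_add a b

lemma sesq_negl {T : V → V → ℂ} (h : IsSesq T) (a c : V) : T (-a) c = -T a c := by
  have := (h.1 c).map_smul (-1 : ℂ) a
  simpa [neg_one_smul] using this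

lemma sesq_addr {T : V → V → ℂ} (h : IsSesq T) (a b c : V) :
    T a (b + c) = T a b + T a c := by
  have h2 := congrArg (starRingEnd ℂ) ((h.2 a).map_add b c)
  simpa [map_add, Complex.conj_conj] using h2

lemma sesq_negr {T : V → V → ℂ} (h : IsSesq T) (a c : V) : T a (-c) = -T a c := by
  have h2 := congrArg (starRingEnd ℂ) ((h.2 a).map_smul (-1 : ℂ) c)
  simp only [neg_one_smul, map_neg, Complex.conj_conj] at h2
  exact h2

lemma sesq_sub_re_le {T : V → V → ℂ} (h : IsSesq T) (hpos : IsPositiveForm T) (a b : V) :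
    (T (a - b) (a - b)).re ≤ 2 * (T a a).re + 2 * (T b b).re := by
  have key : T (a - b) (a - b) + T (a + b) (a + b) =
      (T a a + T a a) + (T b b + T b b) := by
    simp only [sub_eq_add_neg, sesq_addl h, sesq_addr h, sesq_negl h, sesq_negr h]
    ring
  have h1 := (hpos (a + b)).2
  have h2 := congrArg Complex.re key
  simp only [Complex.add_re] at h2
  linarith

/-- Type synonym carrying the norm `n`. -/
def WithN (V : Type) (_n : V → ℝ) : Type := V

@[reducible] instance (n : V → ℝ) : AddCommGroup (WithN V n) := ‹AddCommGroup V›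
@[reducible] instance (n : V → ℝ) : Module ℂ (WithN V n) := ‹Module ℂ V›

/-- Normed group structure from a norm function. -/
@[reducible] noncomputable def mkNormedGroup (n : V → ℝ) (hn : IsNormFn n) :
    NormedAddCommGroup (WithN V n) :=
  AddGroupNorm.toNormedAddCommGroup
    { toFun := fun x => n x
      map_zero' := (hn.1 0).2 rfl
      add_le' := hn.2.2
      neg' := fun x => by
        have h : n (-x) = ‖(-1 : ℂ)‖ * n x := by
          convert hn.2.1 (-1) x using 2; exact congrArg n (neg_one_smul ℂ x).symm
        simpa using h
      eq_zero_of_map_eq_zero' := fun x hx => (hn.1 x).1 hx }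

lemma mkComplete (n : V → ℝ) (hn : IsNormFn n) (hcn : CompleteWrt n) :
    letI := mkNormedGroup (V := V) n hn
    CompleteSpace (WithN V n) := by
  letI := mkNormedGroup (V := V) n hn
  apply Metric.complete_of_cauchySeq_tendsto
  intro u hu
  have hu' : IsCauchyWrt n u := by
    intro ε hε
    obtain ⟨N, hNn⟩ := Metric.cauchySeq_iff.1 hu ε hε
    refine ⟨N, fun p q hp hq => ?_⟩
    have := hNn p hp q hq
    rw [dist_eq_norm] at this
    exact this
  obtain ⟨x, hx⟩ := hcn u hu'
  refine ⟨x, ?_⟩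
  exact tendsto_iff_norm_sub_tendsto_zero.2 hx

theorem aux_dom (T : V → V → ℂ) (hsesq : IsSesq T) (hpos : IsPositiveForm T)
    (hN : ∀ ξ : V, T ξ ξ = 0 → ξ = 0)
    (n n' : V → ℝ) (hn : IsNormFn n) (hn' : IsNormFn n')
    (hc : CompleteWrt n) (hc' : CompleteWrt n')
    (hb : ∃ α : ℝ, 0 < α ∧ ∀ ξ : V, (T ξ ξ).re ≤ α * n ξ ^ 2)
    (hb' : ∃ α' : ℝ, 0 < α' ∧ ∀ ξ : V, (T ξ ξ).re ≤ α' * n' ξ ^ 2) :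
    ∃ c : ℝ, 0 < c ∧ ∀ x : V, n' x ≤ c * n x := by
  obtain ⟨α, hα, hbα⟩ := hb
  obtain ⟨α', hα', hbα'⟩ := hb'
  letI G1 : NormedAddCommGroup (WithN V n) := mkNormedGroup n hn
  letI G2 : NormedAddCommGroup (WithN V n') := mkNormedGroup n' hn'
  letI S1 : NormedSpace ℂ (WithN V n) := ⟨fun c x => le_of_eq (hn.2.1 c x)⟩
  letI S2 : NormedSpace ℂ (WithN V n') := ⟨fun c x => le_of_eq (hn'.2.1 c x)⟩
  have norm1 : ∀ x : WithN V n, ‖x‖ = n x := fun _ => rfl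
  have norm2 : ∀ x : WithN V n', ‖x‖ = n' x := fun _ => rfl
  haveI C1 : CompleteSpace (WithN V n) := mkComplete n hn hc
  haveI C2 : CompleteSpace (WithN V n') := mkComplete n' hn' hc'
  let g : WithN V n →ₗ[ℂ] WithN V n' :=
    { toFun := fun x => x
      map_add' := fun _ _ => rfl
      map_smul' := fun _ _ => rfl }
  have hcont : Continuous g := by
    apply LinearMap.continuous_of_seq_closed_graph
    intro u x y hux0 huy0
    rw [tendsto_iff_norm_sub_tendsto_zero] at hux0 huy0
    let xv : V := x
    let yv : V := y
    let uv : ℕ → V := fun k => u k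
    have hux : Tendsto (fun k => n (uv k - xv)) atTop (𝓝 0) := hux0
    have huy : Tendsto (fun k => n' (uv k - yv)) atTop (𝓝 0) := huy0
    have hTx : Tendsto (fun k => (T (uv k - xv) (uv k - xv)).re) atTop (𝓝 0) := by
      have hsq : Tendsto (fun k => α * n (uv k - xv) ^ 2) atTop (𝓝 0) := by
        have := (hux.mul hux).const_mul α
        simpa [sq, mul_assoc] using this
      exact squeeze_zero (fun k => (hpos _).2) (fun k => hbα _) hsq
    have hTy : Tendsto (fun k => (T (uv k - yv) (uv k - yv)).re) atTop (𝓝 0) := by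
      have hsq : Tendsto (fun k => α' * n' (uv k - yv) ^ 2) atTop (𝓝 0) := by
        have := (huy.mul huy).const_mul α'
        simpa [sq, mul_assoc] using this
      exact squeeze_zero (fun k => (hpos _).2) (fun k => hbα' _) hsq
    have hbound : ∀ k : ℕ, (T (xv - yv) (xv - yv)).re ≤
        2 * (T (uv k - yv) (uv k - yv)).re + 2 * (T (uv k - xv) (uv k - xv)).re := by
      intro k
      have h0 := sesq_sub_re_le hsesq hpos (uv k - yv) (uv k - xv)
      have hxy : (uv k - yv) - (uv k - xv) = xv - yv := by abel
      rwa [hxy] at h0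
    have hlim : Tendsto (fun k : ℕ =>
        2 * (T (uv k - yv) (uv k - yv)).re + 2 * (T (uv k - xv) (uv k - xv)).re)
        atTop (𝓝 0) := by
      have := (hTy.const_mul 2).add (hTx.const_mul 2)
      simpa using this
    have hle : (T (xv - yv) (xv - yv)).re ≤ 0 :=
      le_of_tendsto_of_tendsto' tendsto_const_nhds hlim hbound
    have heq : T (xv - yv) (xv - yv) = 0 := by
      have him := (hpos (xv - yv)).1
      have hge := (hpos (xv - yv)).2
      have hre : (T (xv - yv) (xv - yv)).re = 0 := le_antisymm hle hge
      exact Complex.ext (by simpa using hre) (by simpa using him)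
    have hsub : xv - yv = 0 := hN _ heq
    have hxy2 : xv = yv := by rwa [sub_eq_zero] at hsub
    exact hxy2.symm
  obtain ⟨C, hC, hCb⟩ := SemilinearMapClass.bound_of_continuous g hcont
  exact ⟨C, hC, fun x => hCb x⟩

end Aux

end Paper

namespace Paper

theorem banach_norms_dominating_equivalent (D : Type) [AddCommGroup D] [Module ℂ D]
    (T : D → D → ℂ) (hsesq : IsSesq T) (hpos : IsPositiveForm T)
    (hN : ∀ ξ : D, T ξ ξ = 0 → ξ = 0)
    (n n' : D → ℝ) (hn : IsNormFn n) (hn' : IsNormFn n')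
    (hc : CompleteWrt n) (hc' : CompleteWrt n')
    (hb : ∃ α : ℝ, 0 < α ∧ ∀ ξ : D, (T ξ ξ).re ≤ α * n ξ ^ 2)
    (hb' : ∃ α' : ℝ, 0 < α' ∧ ∀ ξ : D, (T ξ ξ).re ≤ α' * n' ξ ^ 2) :
    EquivNorms n n' := by
  obtain ⟨c2, hc2, h2⟩ := aux_dom T hsesq hpos hN n n' hn hn' hc hc' hb hb'
  obtain ⟨c1, hc1, h1⟩ := aux_dom T hsesq hpos hN n' n hn' hn hc' hc hb' hb
  exact ⟨c1, hc1, c2, hc2, fun x => ⟨h1 x, h2 x⟩⟩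

end Paper
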